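/- Let Z₀ be the inverse of the Gram matrix S of the Weyl-invariant inner product for E₆ (as in the paper's Table 1). Then for an integer b, the matrix b·Z₀ is integral if and only if 3 divides b; hence the centralizer of the natural symplectic representation of W(E₆) in Sp(12, ℤ) is isomorphic to Γ⁰(3). -/

import Mathlib

open Matrix

/-- The matrix Z₀ = S⁻¹ for E₆: the inverse of the Gram matrix of the
Weyl-invariant inner product on the E₆ root lattice. -/
noncomputable def Z0E6 : Matrix (Fin 6) (Fin 6) ℝ :=
  !![4/3, 1, 5/3, 2, 4/3, 2/3;
     1,   2, 2,   3, 2,   1;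
     5/3, 2, 10/3,4, 8/3, 4/3;
     2,   3, 4,   6, 4,   2;
     4/3, 2, 8/3, 4, 10/3,5/3;
     2/3, 1, 4/3, 2, 5/3, 4/3]

/-- The E₆ Cartan/Gram matrix S, the inverse of Z₀. -/
def SE6 : Matrix (Fin 6) (Fin 6) ℝ :=
  !![2, 0, -1, 0, 0, 0;
     0, 2, 0, -1, 0, 0;
     -1, 0, 2, -1, 0, 0;
     0, -1, -1, 2, -1, 0;
     0, 0, 0, -1, 2, -1;
     0, 0, 0, 0, -1, 2]

@[simp] lemma cons_val_five' {α : Type*} (x : α) (u : Fin 5 → α) :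
    Matrix.vecCons x u 5 = u 4 := rfl

lemma Z0E6_mul_SE6 : Z0E6 * SE6 = 1 := by
  show Z0E6 * SE6 = (1 : Matrix (Fin 6) (Fin 6) ℝ)
  ext i j
  fin_cases i <;> fin_cases j <;>
    norm_num [Z0E6, SE6, Matrix.mul_apply, Fin.sum_univ_succ, Matrix.one_apply, Matrix.vecHead, Matrix.vecTail, Fin.ext_iff]

lemma Z0E6_inv : Z0E6⁻¹ = SE6 := inv_eq_right_inv Z0E6_mul_SE6

def K3 : Matrix (Fin 6) (Fin 6) ℤ :=
  !![4, 3, 5, 6, 4, 2;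
     3, 6, 6, 9, 6, 3;
     5, 6, 10, 12, 8, 4;
     6, 9, 12, 18, 12, 6;
     4, 6, 8, 12, 10, 5;
     2, 3, 4, 6, 5, 4]

lemma three_mul_int (i j : Fin 6) : 3 * Z0E6 i j = ((K3 i j : ℤ) : ℝ) := by
  fin_cases i <;> fin_cases j <;>
    norm_num [Z0E6, K3, Matrix.vecHead, Matrix.vecTail]

def SZ : Matrix (Fin 6) (Fin 6) ℤ :=
  !![2, 0, -1, 0, 0, 0;
     0, 2, 0, -1, 0, 0;
     -1, 0, 2, -1, 0, 0;
     0, -1, -1, 2, -1, 0;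
     0, 0, 0, -1, 2, -1;
     0, 0, 0, 0, -1, 2]

lemma SE6_int (i j : Fin 6) : SE6 i j = ((SZ i j : ℤ) : ℝ) := by
  fin_cases i <;> fin_cases j <;>
    norm_num [SE6, SZ, Matrix.vecHead, Matrix.vecTail]

lemma main_iff (b : ℤ) :
    (∀ i j : Fin 6, ∃ k : ℤ, (b : ℝ) * Z0E6 i j = (k : ℝ)) ↔ (3 : ℤ) ∣ b := by
  constructor
  · intro h
    obtain ⟨k, hk⟩ := h 0 5
    have h05 : Z0E6 0 5 = 2 / 3 := by simp [Z0E6, Matrix.vecHead, Matrix.vecTail]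
    rw [h05] at hk
    have h2 : (2 * b : ℤ) = 3 * k := by
      have : ((2 * b : ℤ) : ℝ) = ((3 * k : ℤ) : ℝ) := by push_cast; linarith
      exact_mod_cast this
    have h3 : (3 : ℤ) ∣ 2 * b := ⟨k, h2⟩
    omega
  · rintro ⟨m, rfl⟩ i j
    have hk := three_mul_int i j
    exact ⟨m * K3 i j, by push_cast; rw [← hk]; ring⟩

/-- For b ∈ ℤ, the matrix b·Z₀ (Z₀ the inverse Gram matrix for E₆)
is integral iff 3 ∣ b; hence the centralizer of the natural symplectic
representation of W(E₆) in Sp(12,ℤ), consisting of the block matrices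
[[aI, bZ₀],[cZ₀⁻¹, dI]] with ad−bc = 1 and integral off-diagonal blocks, is
isomorphic to Γ⁰(3) = {(a,b,c,d) ∈ SL₂(ℤ) : 3 ∣ b}. -/
theorem E6_centralizer_is_Gamma0_3 (b : ℤ) :
    ((∀ i j : Fin 6, ∃ k : ℤ, (b : ℝ) * Z0E6 i j = (k : ℝ)) ↔ (3 : ℤ) ∣ b) ∧
    (∀ a c d : ℤ, a * d - b * c = 1 →
      (((∀ i j : Fin 6, ∃ k : ℤ, (b : ℝ) * Z0E6 i j = (k : ℝ)) ∧
        (∀ i j : Fin 6, ∃ k : ℤ, (c : ℝ) * Z0E6⁻¹ i j = (k : ℝ))) ↔ (3 : ℤ) ∣ b)) := by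
  refine ⟨main_iff b, fun a c d _ => ?_⟩
  constructor
  · rintro ⟨h1, _⟩
    exact (main_iff b).mp h1
  · intro hb
    refine ⟨(main_iff b).mpr hb, fun i j => ?_⟩
    have hk := SE6_int i j
    exact ⟨c * SZ i j, by rw [Z0E6_inv, hk]; push_cast; ring⟩
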